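/- arXiv:2307.02619 — 2 statements merged into one kernel-verified Lean document; each statement's English description precedes it below -/
import Mathlib

section
/- The following identities hold in ℂ((z^{−1})): (i) the series z − a_0^{(0)} − Σ_{i=1}^{q} Σ_{j=1}^{p} a_0^{(i)} a_0^{(−j)} A^{(1)}_{i−1,j−1}(z) is nonzero and A_{0,0}(z) is its multiplicative inverse, i.e. A_{0,0}(z)·(z − a_0^{(0)} − Σ_{i=1}^{q} Σ_{j=1}^{p} a_0^{(i)} a_0^{(−j)} A^{(1)}_{i−1,j−1}(z)) = 1; (ii) for every j ≥ 1, A_{0,j}(z) = A_{0,0}(z)·Σ_{i=1}^{q} a_0^{(i)} A^{(1)}_{i−1,j−1}(z); (iii) for every i ≥ 1, A_{i,0}(z) = A_{0,0}(z)·Σ_{j=1}^{p} a_0^{(−j)} A^{(1)}_{i−1,j−1}(z); (iv) for all i, j ≥ 1, A_{0,0}(z)·A_{i,j}(z) = A_{i,0}(z)·A_{0,j}(z) + A_{0,0}(z)·A^{(1)}_{i−1,j−1}(z). -/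
open scoped BigOperators
open Finset

noncomputable section

/-- The field `ℂ((z⁻¹))`, realized as Laurent series in the variable `t = z⁻¹`. -/
abbrev LS : Type := LaurentSeries ℂ

/-- The element `z` of `ℂ((z⁻¹))` (i.e. `t⁻¹`). -/
def zLS : LS := HahnSeries.single (-1 : ℤ) (1 : ℂ)

/-- Constant (scalar) Laurent series. -/
def CLS (c : ℂ) : LS := HahnSeries.C c

/-- The generating series `Σ_{n ≥ 0} c n · z^{-n-1}` in `ℂ((z⁻¹))`. -/
def gen (c : ℕ → ℂ) : LS :=
  HahnSeries.single (1 : ℤ) (1 : ℂ) * (HahnSeries.ofPowerSeries ℤ ℂ) (PowerSeries.mk c)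

/-- Weight of a step of displacement `s` starting at height `h`:
`a_h^{(s)}` if `s ≥ 0`, and `a_{h+s}^{(s)}` if `s < 0`.  (Here `a k n = aₙ⁽ᵏ⁾`.) -/
def stepW (a : ℤ → ℤ → ℂ) (h s : ℤ) : ℂ := if 0 ≤ s then a s h else a s (h + s)

/-- Extend a finite step sequence by zero. -/
def ext {n : ℕ} (s : Fin n → ℤ) : ℕ → ℤ := fun t => if h : t < n then s ⟨t, h⟩ else 0

/-- Height after `k` steps, starting at height `i`. -/
def hgt (i : ℤ) (σ : ℕ → ℤ) (k : ℕ) : ℤ := i + ∑ t ∈ Finset.range k, σ t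

/-- Weight of the lattice path of length `n` starting at height `i` with steps `σ`. -/
def wgt (a : ℤ → ℤ → ℂ) (n : ℕ) (i : ℤ) (σ : ℕ → ℤ) : ℂ :=
  ∏ k ∈ Finset.range n, stepW a (hgt i σ k) (σ k)

/-- All admissible step sequences of length `n` (each step in `[-p, q]`). -/
def steps (p q n : ℕ) : Finset (Fin n → ℤ) :=
  Fintype.piFinset fun _ => Finset.Icc (-(p : ℤ)) (q : ℤ)

/-- `A_{[n,i,j]}`: weight polynomial of paths of length `n` from `(0,i)` to `(n,j)`
staying at height `≥ 0`. -/
def Apoly (p q : ℕ) (a : ℤ → ℤ → ℂ) (n : ℕ) (i j : ℤ) : ℂ :=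
  ∑ s ∈ steps p q n,
    if hgt i (ext s) n = j ∧ ∀ k ≤ n, 0 ≤ hgt i (ext s) k then wgt a n i (ext s) else 0

/-- `W_{[n,i,j]}`: weight polynomial of unrestricted paths of length `n` from `(0,i)` to `(n,j)`. -/
def Wpoly (p q : ℕ) (a : ℤ → ℤ → ℂ) (n : ℕ) (i j : ℤ) : ℂ :=
  ∑ s ∈ steps p q n, if hgt i (ext s) n = j then wgt a n i (ext s) else 0

/-- `V_{[n,i,j]}`: weight polynomial of paths of length `n` from `(0,i)` to `(n,j)`
staying at height `≤ -1`. -/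
def Vpoly (p q : ℕ) (a : ℤ → ℤ → ℂ) (n : ℕ) (i j : ℤ) : ℂ :=
  ∑ s ∈ steps p q n,
    if hgt i (ext s) n = j ∧ ∀ k ≤ n, hgt i (ext s) k ≤ -1 then wgt a n i (ext s) else 0

/-- `A_{[ℓ,i,j,N]}`: weight polynomial of paths of length `ℓ` from `(0,i)` to `(ℓ,j)`
with all heights in `{0, …, N-1}`. -/
def Aboxpoly (p q : ℕ) (a : ℤ → ℤ → ℂ) (N ℓ : ℕ) (i j : ℤ) : ℂ :=
  ∑ s ∈ steps p q ℓ,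
    if hgt i (ext s) ℓ = j ∧ ∀ k ≤ ℓ, 0 ≤ hgt i (ext s) k ∧ hgt i (ext s) k ≤ (N : ℤ) - 1
    then wgt a ℓ i (ext s) else 0

/-- The generating series `A_{i,j}(z)`. -/
def Aser (p q : ℕ) (a : ℤ → ℤ → ℂ) (i j : ℤ) : LS := gen fun n => Apoly p q a n i j

/-- The generating series `W_{i,j}(z)`. -/
def Wser (p q : ℕ) (a : ℤ → ℤ → ℂ) (i j : ℤ) : LS := gen fun n => Wpoly p q a n i j

/-- The generating series `V_{i,j}(z)`. -/
def Vser (p q : ℕ) (a : ℤ → ℤ → ℂ) (i j : ℤ) : LS := gen fun n => Vpoly p q a n i j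

lemma stepW_shift (a : ℤ → ℤ → ℂ) (h s : ℤ) :
    stepW (fun k n => a k (n + 1)) h s = stepW a (h + 1) s := by
  unfold stepW
  split
  · rfl
  · ring_nf

lemma mem_steps {p q n : ℕ} {s : Fin n → ℤ} :
    s ∈ steps p q n ↔ ∀ k, s k ∈ Finset.Icc (-(p:ℤ)) (q:ℤ) := by
  simp [steps, Fintype.mem_piFinset]

lemma apoly_zero (p q : ℕ) (a : ℤ → ℤ → ℂ) (i j : ℤ) :
    Apoly p q a 0 i j = if i = j ∧ 0 ≤ i then 1 else 0 := by
  unfold Apoly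
  have hcard : (steps p q 0).card = 1 := by
    simp [steps, Fintype.card_piFinset]
  rw [Finset.sum_congr rfl (fun s _ => ?_), Finset.sum_const, hcard, one_smul]
  have h0 : hgt i (ext s) 0 = i := by simp [hgt]
  have hw : wgt a 0 i (ext s) = 1 := by simp [wgt]
  rw [hw]
  congr 1
  simp only [h0, eq_iff_iff]
  constructor
  · rintro ⟨h1, h2⟩
    exact ⟨h1, by simpa [h0] using h2 0 le_rfl⟩
  · rintro ⟨h1, h2⟩
    exact ⟨h1, fun k hk => by simp_all [Nat.le_zero.mp hk, h0]⟩

lemma apoly_neg_start (p q : ℕ) (a : ℤ → ℤ → ℂ) (n : ℕ) {i : ℤ} (j : ℤ) (hi : i < 0) :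
    Apoly p q a n i j = 0 := by
  unfold Apoly
  refine Finset.sum_eq_zero fun s _ => ?_
  rw [if_neg]
  rintro ⟨-, h2⟩
  have := h2 0 (Nat.zero_le n)
  simp only [hgt, Finset.range_zero, Finset.sum_empty, add_zero] at this
  omega

lemma apoly_neg_end (p q : ℕ) (a : ℤ → ℤ → ℂ) (n : ℕ) (i : ℤ) {j : ℤ} (hj : j < 0) :
    Apoly p q a n i j = 0 := by
  unfold Apoly
  refine Finset.sum_eq_zero fun s _ => ?_
  rw [if_neg]
  rintro ⟨h1, h2⟩
  have := h2 n le_rfl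
  omega
lemma hgt_zero (i : ℤ) (σ : ℕ → ℤ) : hgt i σ 0 = i := by simp [hgt]

lemma steps_succ (p q n : ℕ) :
    steps p q (n+1) =
      (Finset.Icc (-(p:ℤ)) (q:ℤ) ×ˢ steps p q n).map (Fin.consEquiv fun _ => ℤ).toEmbedding := by
  ext s
  rw [Finset.mem_map_equiv]
  simp [steps, Fintype.mem_piFinset, Fin.consEquiv, Fin.forall_fin_succ, Fin.tail]

lemma ext_cons_zero {n : ℕ} (x : ℤ) (t : Fin n → ℤ) : _root_.ext (Fin.cons x t) 0 = x := by
  unfold _root_.ext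
  rw [dif_pos (Nat.succ_pos n)]
  exact Fin.cons_zero (α := fun _ => ℤ) x t

lemma ext_cons_succ {n : ℕ} (x : ℤ) (t : Fin n → ℤ) (u : ℕ) :
    _root_.ext (Fin.cons x t) (u+1) = _root_.ext t u := by
  unfold _root_.ext
  by_cases h : u < n
  · rw [dif_pos (Nat.succ_lt_succ h), dif_pos h]
    exact Fin.cons_succ (α := fun _ => ℤ) x t ⟨u, h⟩
  · rw [dif_neg (by omega), dif_neg h]

lemma hgt_shift (i x : ℤ) (σ τ : ℕ → ℤ) (h0 : σ 0 = x) (hs : ∀ u, σ (u+1) = τ u) (k : ℕ) :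
    hgt i σ (k+1) = hgt (i+x) τ k := by
  unfold hgt
  rw [Finset.sum_range_succ']
  simp only [hs, h0]
  ring

lemma wgt_shift (a : ℤ → ℤ → ℂ) (n : ℕ) (i x : ℤ) (σ τ : ℕ → ℤ)
    (h0 : σ 0 = x) (hs : ∀ u, σ (u+1) = τ u) :
    wgt a (n+1) i σ = stepW a i x * wgt a n (i+x) τ := by
  unfold wgt
  rw [Finset.prod_range_succ']
  rw [mul_comm]
  congr 1
  · rw [hgt_zero, h0]
  · exact Finset.prod_congr rfl fun k _ => by rw [hgt_shift i x σ τ h0 hs, hs]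

/-- First-step decomposition. -/
lemma apoly_succ_left (p q : ℕ) (a : ℤ → ℤ → ℂ) (n : ℕ) {i : ℤ} (j : ℤ) (hi : 0 ≤ i) :
    Apoly p q a (n+1) i j =
      ∑ s ∈ Finset.Icc (-(p:ℤ)) (q:ℤ), stepW a i s * Apoly p q a n (i+s) j := by
  unfold Apoly
  rw [steps_succ, Finset.sum_map, Finset.sum_product]
  refine Finset.sum_congr rfl fun x _ => ?_
  rw [Finset.mul_sum]
  refine Finset.sum_congr rfl fun t _ => ?_
  have he : (Fin.consEquiv fun _ => ℤ).toEmbedding (x, t) = Fin.cons x t := rfl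
  rw [he]
  have h0 := ext_cons_zero x t
  have hs := ext_cons_succ x t
  have hh : ∀ k, hgt i (_root_.ext (Fin.cons x t)) (k+1) = hgt (i+x) (ext t) k :=
    hgt_shift i x _ _ h0 hs
  have hw := wgt_shift a n i x _ _ h0 hs
  have hcond : (hgt i (_root_.ext (Fin.cons x t)) (n+1) = j ∧
      ∀ k ≤ n+1, 0 ≤ hgt i (_root_.ext (Fin.cons x t)) k) ↔
      (hgt (i+x) (ext t) n = j ∧ ∀ k ≤ n, 0 ≤ hgt (i+x) (ext t) k) := by
    constructor
    · rintro ⟨h1, h2⟩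
      exact ⟨by rw [← hh]; exact h1, fun k hk => by rw [← hh]; exact h2 (k+1) (by omega)⟩
    · rintro ⟨h1, h2⟩
      refine ⟨by rw [hh]; exact h1, fun k hk => ?_⟩
      cases k with
      | zero => rw [hgt_zero]; exact hi
      | succ u => rw [hh]; exact h2 u (by omega)
  rw [hw]
  by_cases hc : hgt (i+x) (ext t) n = j ∧ ∀ k ≤ n, 0 ≤ hgt (i+x) (ext t) k
  · rw [if_pos (hcond.mpr hc), if_pos hc]
  · rw [if_neg (fun h => hc (hcond.mp h)), if_neg hc, mul_zero]
lemma steps_succ' (p q n : ℕ) :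
    steps p q (n+1) =
      (Finset.Icc (-(p:ℤ)) (q:ℤ) ×ˢ steps p q n).map (Fin.snocEquiv fun _ => ℤ).toEmbedding := by
  ext s
  rw [Finset.mem_map_equiv]
  simp [steps, Fintype.mem_piFinset, Fin.snocEquiv, Fin.forall_fin_succ', Fin.init, and_comm]

lemma ext_snoc_lt {n : ℕ} (x : ℤ) (t : Fin n → ℤ) {u : ℕ} (h : u < n) :
    _root_.ext (Fin.snoc t x : Fin (n+1) → ℤ) u = _root_.ext t u := by
  unfold _root_.ext
  rw [dif_pos (by omega : u < n + 1), dif_pos h]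
  show (Fin.snoc t x : Fin (n+1) → ℤ) (Fin.castSucc ⟨u, h⟩) = t ⟨u, h⟩
  rw [Fin.snoc_castSucc]

lemma ext_snoc_last {n : ℕ} (x : ℤ) (t : Fin n → ℤ) :
    _root_.ext (Fin.snoc t x : Fin (n+1) → ℤ) n = x := by
  unfold _root_.ext
  rw [dif_pos (by omega : n < n + 1)]
  show (Fin.snoc t x : Fin (n+1) → ℤ) (Fin.last n) = x
  rw [Fin.snoc_last]

lemma hgt_snoc_le {n : ℕ} (i x : ℤ) (t : Fin n → ℤ) {k : ℕ} (hk : k ≤ n) :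
    hgt i (_root_.ext (Fin.snoc t x : Fin (n+1) → ℤ)) k = hgt i (_root_.ext t) k := by
  unfold hgt
  congr 1
  exact Finset.sum_congr rfl fun u hu => ext_snoc_lt x t (by
    have := Finset.mem_range.mp hu; omega)

lemma hgt_snoc_succ {n : ℕ} (i x : ℤ) (t : Fin n → ℤ) :
    hgt i (_root_.ext (Fin.snoc t x : Fin (n+1) → ℤ)) (n+1) = hgt i (_root_.ext t) n + x := by
  unfold hgt
  rw [Finset.sum_range_succ, ext_snoc_last]
  rw [Finset.sum_congr rfl fun u hu => ext_snoc_lt x t (Finset.mem_range.mp hu)]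
  ring

lemma wgt_snoc {n : ℕ} (a : ℤ → ℤ → ℂ) (i x : ℤ) (t : Fin n → ℤ) :
    wgt a (n+1) i (_root_.ext (Fin.snoc t x : Fin (n+1) → ℤ)) =
      wgt a n i (_root_.ext t) * stepW a (hgt i (_root_.ext t) n) x := by
  unfold wgt
  rw [Finset.prod_range_succ]
  congr 1
  · exact Finset.prod_congr rfl fun k hk => by
      have hkn := Finset.mem_range.mp hk
      rw [hgt_snoc_le i x t (by omega), ext_snoc_lt x t hkn]
  · rw [hgt_snoc_le i x t le_rfl, ext_snoc_last]

/-- Last-step decomposition. -/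
lemma apoly_succ_right (p q : ℕ) (a : ℤ → ℤ → ℂ) (n : ℕ) (i : ℤ) {j : ℤ} (hj : 0 ≤ j) :
    Apoly p q a (n+1) i j =
      ∑ s ∈ Finset.Icc (-(p:ℤ)) (q:ℤ), stepW a (j-s) s * Apoly p q a n i (j-s) := by
  unfold Apoly
  rw [steps_succ', Finset.sum_map, Finset.sum_product]
  refine Finset.sum_congr rfl fun x _ => ?_
  rw [Finset.mul_sum]
  refine Finset.sum_congr rfl fun t _ => ?_
  have he : (Fin.snocEquiv fun _ => ℤ).toEmbedding (x, t) = (Fin.snoc t x : Fin (n+1) → ℤ) := by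
    funext u; rfl
  rw [he]
  have hcond : (hgt i (_root_.ext (Fin.snoc t x : Fin (n+1) → ℤ)) (n+1) = j ∧
      ∀ k ≤ n+1, 0 ≤ hgt i (_root_.ext (Fin.snoc t x : Fin (n+1) → ℤ)) k) ↔
      (hgt i (_root_.ext t) n = j - x ∧ ∀ k ≤ n, 0 ≤ hgt i (_root_.ext t) k) := by
    constructor
    · rintro ⟨h1, h2⟩
      rw [hgt_snoc_succ] at h1
      refine ⟨by omega, fun k hk => ?_⟩
      rw [← hgt_snoc_le i x t hk]
      exact h2 k (by omega)
    · rintro ⟨h1, h2⟩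
      constructor
      · rw [hgt_snoc_succ, h1]; ring
      · intro k hk
        rcases Nat.lt_or_ge k (n+1) with h | h
        · rw [hgt_snoc_le i x t (by omega)]; exact h2 k (by omega)
        · have : k = n + 1 := by omega
          rw [this, hgt_snoc_succ, h1]
          omega
  by_cases hc : hgt i (_root_.ext t) n = j - x ∧ ∀ k ≤ n, 0 ≤ hgt i (_root_.ext t) k
  · rw [if_pos (hcond.mpr hc), if_pos hc, wgt_snoc, hc.1, mul_comm]
  · rw [if_neg (fun h => hc (hcond.mp h)), if_neg hc, mul_zero]
/-- First-passage (first hit of height 0) decomposition. -/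
lemma fh (p q : ℕ) (a : ℤ → ℤ → ℂ) :
    ∀ n : ℕ, ∀ i j : ℤ, 1 ≤ i →
    Apoly p q a n i j =
      Apoly p q (fun k m => a k (m+1)) n (i-1) (j-1) +
      ∑ m ∈ Finset.range n,
        (∑ j' ∈ Finset.Icc 1 p,
          a (-(j':ℤ)) 0 * Apoly p q (fun k m => a k (m+1)) m (i-1) ((j':ℤ)-1)) *
          Apoly p q a (n-1-m) 0 j := by
  intro n
  induction n with
  | zero =>
    intro i j hi
    simp only [Finset.range_zero, Finset.sum_empty, add_zero, apoly_zero]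
    by_cases hij : i = j
    · rw [if_pos ⟨hij, by omega⟩, if_pos ⟨by omega, by omega⟩]
    · rw [if_neg (fun h => hij h.1), if_neg (fun h => hij (by omega))]
  | succ n IH =>
    intro i j hi
    have h1 : Apoly p q a (n+1) i j =
        ∑ s ∈ Finset.Icc (-(p:ℤ)) (q:ℤ), stepW a i s * Apoly p q a n (i+s) j :=
      apoly_succ_left p q a n j (by omega)
    have hii : i - 1 + 1 = i := by ring
    have h2 : Apoly p q (fun k m => a k (m+1)) (n+1) (i-1) (j-1) =
        ∑ s ∈ Finset.Icc (-(p:ℤ)) (q:ℤ),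
          stepW a i s * Apoly p q (fun k m => a k (m+1)) n (i-1+s) (j-1) := by
      rw [apoly_succ_left p q _ n (j-1) (by omega : (0:ℤ) ≤ i - 1)]
      refine Finset.sum_congr rfl fun s _ => ?_
      rw [stepW_shift, hii]
    have hF : ∀ m : ℕ,
        (∑ j' ∈ Finset.Icc 1 p,
          a (-(j':ℤ)) 0 * Apoly p q (fun k m => a k (m+1)) (m+1) (i-1) ((j':ℤ)-1)) =
        ∑ s ∈ Finset.Icc (-(p:ℤ)) (q:ℤ), stepW a i s *
          (∑ j' ∈ Finset.Icc 1 p,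
            a (-(j':ℤ)) 0 * Apoly p q (fun k m => a k (m+1)) m (i-1+s) ((j':ℤ)-1)) := by
      intro m
      have expand : ∀ j' : ℕ,
          Apoly p q (fun k m => a k (m+1)) (m+1) (i-1) ((j':ℤ)-1) =
          ∑ s ∈ Finset.Icc (-(p:ℤ)) (q:ℤ),
            stepW a i s * Apoly p q (fun k m => a k (m+1)) m (i-1+s) ((j':ℤ)-1) := by
        intro j'
        rw [apoly_succ_left p q _ m ((j':ℤ)-1) (by omega : (0:ℤ) ≤ i - 1)]
        refine Finset.sum_congr rfl fun s _ => ?_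
        rw [stepW_shift, hii]
      simp only [expand, Finset.mul_sum]
      rw [Finset.sum_comm]
      exact Finset.sum_congr rfl fun s _ => Finset.sum_congr rfl fun j' _ => by ring
    have hF0 : (∑ j' ∈ Finset.Icc 1 p,
          a (-(j':ℤ)) 0 * Apoly p q (fun k m => a k (m+1)) 0 (i-1) ((j':ℤ)-1)) =
        if -i ∈ Finset.Icc (-(p:ℤ)) (q:ℤ) then a (-i) 0 else 0 := by
      have step : ∀ j' ∈ Finset.Icc 1 p,
          a (-(j':ℤ)) 0 * Apoly p q (fun k m => a k (m+1)) 0 (i-1) ((j':ℤ)-1) =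
          if j' = i.toNat then a (-(j':ℤ)) 0 else 0 := by
        intro j' hj'
        have hj'' := Finset.mem_Icc.mp hj'
        rw [apoly_zero]
        by_cases hc : (i:ℤ) - 1 = (j':ℤ) - 1 ∧ (0:ℤ) ≤ i - 1
        · obtain ⟨hc1, hc2⟩ := hc
          rw [if_pos ⟨hc1, hc2⟩, if_pos (by omega), mul_one]
        · rw [if_neg hc, if_neg (fun h => hc ⟨by omega, by omega⟩), mul_zero]
      rw [Finset.sum_congr rfl step,
        Finset.sum_ite_eq' (Finset.Icc 1 p) i.toNat (fun j' => a (-(j':ℤ)) 0)]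
      have hcast : ((i.toNat : ℤ)) = i := by omega
      by_cases hip : i.toNat ∈ Finset.Icc 1 p
      · have h' := Finset.mem_Icc.mp hip
        rw [if_pos hip, if_pos (Finset.mem_Icc.mpr (by omega)), hcast]
      · have h' : ¬ (1 ≤ i.toNat ∧ i.toNat ≤ p) := fun h => hip (Finset.mem_Icc.mpr h)
        rw [if_neg hip, if_neg (fun h => h' (by
          have := Finset.mem_Icc.mp h; omega))]
    have key : ∀ s ∈ Finset.Icc (-(p:ℤ)) (q:ℤ),
        stepW a i s * Apoly p q a n (i+s) j =
        (stepW a i s * Apoly p q (fun k m => a k (m+1)) n (i-1+s) (j-1) +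
          ∑ m ∈ Finset.range n,
            stepW a i s * (∑ j' ∈ Finset.Icc 1 p,
              a (-(j':ℤ)) 0 * Apoly p q (fun k m => a k (m+1)) m (i-1+s) ((j':ℤ)-1)) *
              Apoly p q a (n-1-m) 0 j) +
        (if s = -i then a (-i) 0 * Apoly p q a n 0 j else 0) := by
      intro s _
      rcases lt_trichotomy (i + s) 0 with h | h | h
      · rw [apoly_neg_start p q a n j h,
          apoly_neg_start p q _ n (j-1) (by omega : i - 1 + s < 0),
          if_neg (by omega : ¬ s = -i), mul_zero]
        simp only [apoly_neg_start p q _ _ _ (by omega : i - 1 + s < 0), mul_zero, zero_mul,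
          Finset.sum_const_zero, add_zero, mul_zero]
      · have hs : s = -i := by omega
        rw [apoly_neg_start p q _ n (j-1) (by omega : i - 1 + s < 0),
          if_pos hs]
        simp only [apoly_neg_start p q _ _ _ (by omega : i - 1 + s < 0), mul_zero, zero_mul,
          Finset.sum_const_zero, add_zero, mul_zero, zero_add]
        have hz : i + s = 0 := h
        rw [hz]
        have hst : stepW a i s = a (-i) 0 := by
          unfold stepW
          rw [if_neg (by omega : ¬ (0:ℤ) ≤ s), hs]
          congr 1
          omega
        rw [hst]
      · rw [IH (i+s) j (by omega), if_neg (by omega : ¬ s = -i), add_zero]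
        have harg : i + s - 1 = i - 1 + s := by ring
        rw [harg, mul_add, Finset.mul_sum]
        congr 1
        exact Finset.sum_congr rfl fun m _ => by ring
    -- assemble
    rw [h1, Finset.sum_congr rfl key, Finset.sum_add_distrib, Finset.sum_add_distrib,
      Finset.sum_ite_eq' (Finset.Icc (-(p:ℤ)) (q:ℤ)) (-i)
        (fun _ => a (-i) 0 * Apoly p q a n 0 j)]
    rw [h2]
    simp only [Nat.add_sub_cancel]
    rw [Finset.sum_range_succ']
    simp only [Nat.sub_zero]
    rw [hF0]
    have hsub : ∀ m : ℕ, n - (m + 1) = n - 1 - m := fun m => by omega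
    have hmain : (∑ m ∈ Finset.range n,
        (∑ j' ∈ Finset.Icc 1 p,
          a (-(j':ℤ)) 0 * Apoly p q (fun k m => a k (m+1)) (m+1) (i-1) ((j':ℤ)-1)) *
          Apoly p q a (n-(m+1)) 0 j) =
        ∑ s ∈ Finset.Icc (-(p:ℤ)) (q:ℤ), ∑ m ∈ Finset.range n,
          stepW a i s * (∑ j' ∈ Finset.Icc 1 p,
            a (-(j':ℤ)) 0 * Apoly p q (fun k m => a k (m+1)) m (i-1+s) ((j':ℤ)-1)) *
            Apoly p q a (n-1-m) 0 j := by
      rw [Finset.sum_congr rfl (fun m hm => by rw [hF m, hsub m, Finset.sum_mul])]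
      exact Finset.sum_comm
    rw [hmain]
    have hite : (if -i ∈ Finset.Icc (-(p:ℤ)) (q:ℤ) then a (-i) 0 else 0) *
        Apoly p q a n 0 j =
        if -i ∈ Finset.Icc (-(p:ℤ)) (q:ℤ) then a (-i) 0 * Apoly p q a n 0 j else 0 := by
      split_ifs <;> simp
    rw [hite]
    ring
/-- Last-exit (last visit to height 0) decomposition. -/
lemma le' (p q : ℕ) (a : ℤ → ℤ → ℂ) :
    ∀ n : ℕ, ∀ j : ℤ, 1 ≤ j →
    Apoly p q a n 0 j =
      ∑ m ∈ Finset.range n, Apoly p q a m 0 0 *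
        (∑ i' ∈ Finset.Icc 1 q,
          a (i':ℤ) 0 * Apoly p q (fun k m => a k (m+1)) (n-1-m) ((i':ℤ)-1) (j-1)) := by
  intro n
  induction n with
  | zero =>
    intro j hj
    simp only [Finset.range_zero, Finset.sum_empty, apoly_zero]
    rw [if_neg (fun h => by omega)]
  | succ n IH =>
    intro j hj
    have h1 : Apoly p q a (n+1) 0 j =
        ∑ s ∈ Finset.Icc (-(p:ℤ)) (q:ℤ), stepW a (j-s) s * Apoly p q a n 0 (j-s) :=
      apoly_succ_right p q a n 0 (by omega)
    have hG : ∀ (r : ℕ) (j : ℤ), 1 ≤ j →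
        (∑ i' ∈ Finset.Icc 1 q,
          a (i':ℤ) 0 * Apoly p q (fun k m => a k (m+1)) (r+1) ((i':ℤ)-1) (j-1)) =
        ∑ s ∈ Finset.Icc (-(p:ℤ)) (q:ℤ), stepW a (j-s) s *
          (∑ i' ∈ Finset.Icc 1 q,
            a (i':ℤ) 0 * Apoly p q (fun k m => a k (m+1)) r ((i':ℤ)-1) (j-s-1)) := by
      intro r j hj1
      have expand : ∀ i' : ℕ,
          Apoly p q (fun k m => a k (m+1)) (r+1) ((i':ℤ)-1) (j-1) =
          ∑ s ∈ Finset.Icc (-(p:ℤ)) (q:ℤ),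
            stepW a (j-s) s * Apoly p q (fun k m => a k (m+1)) r ((i':ℤ)-1) (j-s-1) := by
        intro i'
        rw [apoly_succ_right p q _ r ((i':ℤ)-1) (by omega : (0:ℤ) ≤ j - 1)]
        refine Finset.sum_congr rfl fun s _ => ?_
        rw [stepW_shift]
        have e1 : j - 1 - s + 1 = j - s := by ring
        have e2 : j - 1 - s = j - s - 1 := by ring
        rw [e1, e2]
      simp only [expand, Finset.mul_sum]
      rw [Finset.sum_comm]
      exact Finset.sum_congr rfl fun s _ => Finset.sum_congr rfl fun i' _ => by ring
    have hG0 : ∀ j : ℤ, 1 ≤ j →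
        (∑ i' ∈ Finset.Icc 1 q,
          a (i':ℤ) 0 * Apoly p q (fun k m => a k (m+1)) 0 ((i':ℤ)-1) (j-1)) =
        if j ∈ Finset.Icc (-(p:ℤ)) (q:ℤ) then a j 0 else 0 := by
      intro j hj1
      have step : ∀ i' ∈ Finset.Icc 1 q,
          a (i':ℤ) 0 * Apoly p q (fun k m => a k (m+1)) 0 ((i':ℤ)-1) (j-1) =
          if i' = j.toNat then a (i':ℤ) 0 else 0 := by
        intro i' hi'
        have hi'' := Finset.mem_Icc.mp hi'
        rw [apoly_zero]
        by_cases hc : (i':ℤ) - 1 = j - 1 ∧ (0:ℤ) ≤ (i':ℤ) - 1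
        · obtain ⟨hc1, hc2⟩ := hc
          rw [if_pos ⟨hc1, hc2⟩, if_pos (by omega), mul_one]
        · rw [if_neg hc, if_neg (fun h => hc ⟨by omega, by omega⟩), mul_zero]
      rw [Finset.sum_congr rfl step,
        Finset.sum_ite_eq' (Finset.Icc 1 q) j.toNat (fun i' => a (i':ℤ) 0)]
      have hcast : ((j.toNat : ℤ)) = j := by omega
      by_cases hip : j.toNat ∈ Finset.Icc 1 q
      · have h' := Finset.mem_Icc.mp hip
        rw [if_pos hip, if_pos (Finset.mem_Icc.mpr (by omega)), hcast]
      · have h' : ¬ (1 ≤ j.toNat ∧ j.toNat ≤ q) := fun h => hip (Finset.mem_Icc.mpr h)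
        rw [if_neg hip, if_neg (fun h => h' (by
          have := Finset.mem_Icc.mp h; omega))]
    have key : ∀ s ∈ Finset.Icc (-(p:ℤ)) (q:ℤ),
        stepW a (j-s) s * Apoly p q a n 0 (j-s) =
        (∑ m ∈ Finset.range n, Apoly p q a m 0 0 *
          (stepW a (j-s) s * (∑ i' ∈ Finset.Icc 1 q,
            a (i':ℤ) 0 * Apoly p q (fun k m => a k (m+1)) (n-1-m) ((i':ℤ)-1) (j-s-1)))) +
        (if s = j then a j 0 * Apoly p q a n 0 0 else 0) := by
      intro s _
      rcases lt_trichotomy (j - s) 0 with h | h | h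
      · rw [apoly_neg_end p q a n 0 h, if_neg (by omega : ¬ s = j), mul_zero, add_zero]
        have hz : ∀ r : ℕ, (∑ i' ∈ Finset.Icc 1 q,
            a (i':ℤ) 0 * Apoly p q (fun k m => a k (m+1)) r ((i':ℤ)-1) (j-s-1)) = 0 := by
          intro r
          refine Finset.sum_eq_zero fun i' _ => ?_
          rw [apoly_neg_end p q _ r _ (by omega : j - s - 1 < 0), mul_zero]
        simp only [hz, mul_zero, Finset.sum_const_zero]
      · have hs : s = j := by omega
        rw [if_pos hs]
        have hz : ∀ r : ℕ, (∑ i' ∈ Finset.Icc 1 q,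
            a (i':ℤ) 0 * Apoly p q (fun k m => a k (m+1)) r ((i':ℤ)-1) (j-s-1)) = 0 := by
          intro r
          refine Finset.sum_eq_zero fun i' _ => ?_
          rw [apoly_neg_end p q _ r _ (by omega : j - s - 1 < 0), mul_zero]
        simp only [hz, mul_zero, Finset.sum_const_zero, zero_add]
        have hz2 : j - s = 0 := h
        rw [hz2]
        have hst : stepW a 0 s = a j 0 := by
          unfold stepW
          rw [if_pos (by omega : (0:ℤ) ≤ s), hs]
        rw [hst]
      · rw [IH (j-s) (by omega), if_neg (by omega : ¬ s = j), add_zero, Finset.mul_sum]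
        exact Finset.sum_congr rfl fun m _ => by ring
    -- assemble
    rw [h1, Finset.sum_congr rfl key, Finset.sum_add_distrib,
      Finset.sum_ite_eq' (Finset.Icc (-(p:ℤ)) (q:ℤ)) j
        (fun _ => a j 0 * Apoly p q a n 0 0)]
    simp only [Nat.add_sub_cancel]
    rw [Finset.sum_range_succ]
    rw [show n - n = 0 from by omega, hG0 j hj]
    have hmain : (∑ m ∈ Finset.range n, Apoly p q a m 0 0 *
        (∑ i' ∈ Finset.Icc 1 q,
          a (i':ℤ) 0 * Apoly p q (fun k m => a k (m+1)) (n-m) ((i':ℤ)-1) (j-1))) =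
        ∑ s ∈ Finset.Icc (-(p:ℤ)) (q:ℤ), ∑ m ∈ Finset.range n, Apoly p q a m 0 0 *
          (stepW a (j-s) s * (∑ i' ∈ Finset.Icc 1 q,
            a (i':ℤ) 0 * Apoly p q (fun k m => a k (m+1)) (n-1-m) ((i':ℤ)-1) (j-s-1))) := by
      rw [Finset.sum_congr rfl (fun m hm => by
        have hmn := Finset.mem_range.mp hm
        rw [show n - m = (n-1-m)+1 from by omega, hG (n-1-m) j hj, Finset.mul_sum])]
      rw [Finset.sum_comm]
    rw [hmain]
    have hite : Apoly p q a n 0 0 *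
        (if j ∈ Finset.Icc (-(p:ℤ)) (q:ℤ) then a j 0 else 0) =
        if j ∈ Finset.Icc (-(p:ℤ)) (q:ℤ) then a j 0 * Apoly p q a n 0 0 else 0 := by
      split_ifs <;> ring_nf <;> simp
    rw [hite]
/-- Reindex a sum over `Icc (-p) q ⊆ ℤ` whose negative terms vanish. -/
lemma sum_Icc_int (p q : ℕ) (f : ℤ → ℂ) (h0 : ∀ s : ℤ, s < 0 → f s = 0) :
    ∑ s ∈ Finset.Icc (-(p:ℤ)) (q:ℤ), f s = f 0 + ∑ i ∈ Finset.Icc 1 q, f (i:ℤ) := by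
  have h1 : ∑ s ∈ Finset.Icc (-(p:ℤ)) (q:ℤ), f s = ∑ s ∈ Finset.Icc (0:ℤ) (q:ℤ), f s := by
    refine (Finset.sum_subset (fun s hs => ?_) (fun s hs hns => ?_)).symm
    · have := Finset.mem_Icc.mp hs
      exact Finset.mem_Icc.mpr ⟨by omega, this.2⟩
    · have h2 := Finset.mem_Icc.mp hs
      refine h0 s (by_contra fun hc => hns (Finset.mem_Icc.mpr ⟨by omega, h2.2⟩))
  have h2 : ∑ s ∈ Finset.Icc (0:ℤ) (q:ℤ), f s = ∑ i ∈ Finset.Icc (0:ℕ) q, f (i:ℤ) := by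
    refine Finset.sum_bij' (fun s _ => s.toNat) (fun i _ => (i:ℤ)) ?_ ?_ ?_ ?_ ?_
    · intro s hs; have := Finset.mem_Icc.mp hs
      beta_reduce; exact Finset.mem_Icc.mpr ⟨by omega, by omega⟩
    · intro i hi; have := Finset.mem_Icc.mp hi
      beta_reduce; exact Finset.mem_Icc.mpr ⟨by omega, by omega⟩
    · intro s hs; have := Finset.mem_Icc.mp hs; beta_reduce; omega
    · intro i _; beta_reduce; omega
    · intro s hs; have := Finset.mem_Icc.mp hs
      beta_reduce; congr 1; omega
  have h3 : Finset.Icc (0:ℕ) q = insert 0 (Finset.Icc 1 q) := by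
    ext x; simp [Finset.mem_Icc]; omega
  rw [h1, h2, h3, Finset.sum_insert (by simp)]
  norm_num

/-- The power series `Σ Apoly·Xⁿ`. -/
def psA (p q : ℕ) (a : ℤ → ℤ → ℂ) (i j : ℤ) : PowerSeries ℂ :=
  PowerSeries.mk fun n => Apoly p q a n i j

lemma coeff_psA (p q : ℕ) (a : ℤ → ℤ → ℂ) (i j : ℤ) (n : ℕ) :
    (PowerSeries.coeff n) (psA p q a i j) = Apoly p q a n i j :=
  PowerSeries.coeff_mk n _

lemma psA_neg_end (p q : ℕ) (a : ℤ → ℤ → ℂ) (i : ℤ) {j : ℤ} (hj : j < 0) :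
    psA p q a i j = 0 := by
  ext n
  rw [coeff_psA, apoly_neg_end p q a n i hj, map_zero]

/-- PS version of the first-passage decomposition. -/
lemma ps_fh (p q : ℕ) (a : ℤ → ℤ → ℂ) {i : ℤ} (j : ℤ) (hi : 1 ≤ i) :
    psA p q a i j =
      psA p q (fun k m => a k (m+1)) (i-1) (j-1) +
      PowerSeries.X *
        ((∑ j' ∈ Finset.Icc 1 p, PowerSeries.C (a (-(j':ℤ)) 0) *
            psA p q (fun k m => a k (m+1)) (i-1) ((j':ℤ)-1)) *
          psA p q a 0 j) := by
  ext n
  rw [map_add, coeff_psA, coeff_psA]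
  cases n with
  | zero =>
    rw [PowerSeries.coeff_zero_X_mul, add_zero, apoly_zero, apoly_zero]
    by_cases hij : i = j
    · rw [if_pos ⟨hij, by omega⟩, if_pos ⟨by omega, by omega⟩]
    · rw [if_neg (fun h => hij h.1), if_neg (fun h => hij (by omega))]
  | succ n =>
    rw [PowerSeries.coeff_succ_X_mul, PowerSeries.coeff_mul,
      Finset.Nat.sum_antidiagonal_eq_sum_range_succ_mk]
    rw [fh p q a (n+1) i j hi]
    simp only [Nat.add_sub_cancel]
    congr 1
    refine Finset.sum_congr rfl fun m hm => ?_
    congr 1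
    · rw [map_sum]
      refine Finset.sum_congr rfl fun j' _ => ?_
      rw [PowerSeries.coeff_C_mul, coeff_psA]
    · rw [coeff_psA]

/-- PS version of the last-exit decomposition. -/
lemma ps_le (p q : ℕ) (a : ℤ → ℤ → ℂ) {j : ℤ} (hj : 1 ≤ j) :
    psA p q a 0 j =
      PowerSeries.X * (psA p q a 0 0 *
        ∑ i' ∈ Finset.Icc 1 q, PowerSeries.C (a (i':ℤ) 0) *
          psA p q (fun k m => a k (m+1)) ((i':ℤ)-1) (j-1)) := by
  ext n
  rw [coeff_psA]
  cases n with
  | zero =>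
    rw [PowerSeries.coeff_zero_X_mul, apoly_zero, if_neg (fun h => by omega)]
  | succ n =>
    rw [PowerSeries.coeff_succ_X_mul, PowerSeries.coeff_mul,
      Finset.Nat.sum_antidiagonal_eq_sum_range_succ_mk]
    rw [le' p q a (n+1) j hj]
    simp only [Nat.add_sub_cancel]
    refine Finset.sum_congr rfl fun m hm => ?_
    congr 1
    · rw [coeff_psA]
    · rw [map_sum]
      refine Finset.sum_congr rfl fun i' _ => ?_
      rw [PowerSeries.coeff_C_mul, coeff_psA]

/-- PS version of the first-step decomposition at the origin. -/
lemma ps_first (p q : ℕ) (a : ℤ → ℤ → ℂ) :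
    psA p q a 0 0 =
      1 + PowerSeries.X * (PowerSeries.C (a 0 0) * psA p q a 0 0) +
        PowerSeries.X * ∑ i' ∈ Finset.Icc 1 q, PowerSeries.C (a (i':ℤ) 0) *
          psA p q a (i':ℤ) 0 := by
  ext n
  rw [map_add, map_add, coeff_psA]
  cases n with
  | zero =>
    rw [PowerSeries.coeff_zero_X_mul, PowerSeries.coeff_zero_X_mul, add_zero, add_zero,
      apoly_zero, if_pos ⟨rfl, le_rfl⟩, PowerSeries.coeff_zero_one]
  | succ n =>
    rw [PowerSeries.coeff_succ_X_mul, PowerSeries.coeff_succ_X_mul,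
      PowerSeries.coeff_one, if_neg (Nat.succ_ne_zero n), zero_add,
      PowerSeries.coeff_C_mul, coeff_psA,
      apoly_succ_left p q a n 0 le_rfl,
      sum_Icc_int p q _ (fun s hs => by
        rw [apoly_neg_start p q a n 0 (by omega : (0:ℤ) + s < 0), mul_zero])]
    have h0 : stepW a 0 0 * Apoly p q a n (0+0) 0 = a 0 0 * Apoly p q a n 0 0 := by
      unfold stepW
      rw [if_pos le_rfl]
      norm_num
    have h1 : (∑ i' ∈ Finset.Icc 1 q, stepW a 0 (i':ℤ) * Apoly p q a n (0+(i':ℤ)) 0) =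
        (PowerSeries.coeff n) (∑ i' ∈ Finset.Icc 1 q,
          PowerSeries.C (a (i':ℤ) 0) * psA p q a (i':ℤ) 0) := by
      rw [map_sum]
      refine Finset.sum_congr rfl fun i' _ => ?_
      rw [PowerSeries.coeff_C_mul, coeff_psA]
      have hs : stepW a 0 (i':ℤ) = a (i':ℤ) 0 := by
        unfold stepW; rw [if_pos (Int.natCast_nonneg i')]
      rw [hs, zero_add]
    rw [h0, h1]
lemma ps_fh0 (p q : ℕ) (a : ℤ → ℤ → ℂ) {i : ℤ} (hi : 1 ≤ i) :
    psA p q a i 0 =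
      PowerSeries.X *
        ((∑ j' ∈ Finset.Icc 1 p, PowerSeries.C (a (-(j':ℤ)) 0) *
            psA p q (fun k m => a k (m+1)) (i-1) ((j':ℤ)-1)) *
          psA p q a 0 0) := by
  have h := ps_fh p q a 0 hi
  rwa [psA_neg_end p q _ (i-1) (by norm_num : (0:ℤ)-1 < 0), zero_add] at h

lemma aser_eq (p q : ℕ) (a : ℤ → ℤ → ℂ) (i j : ℤ) :
    Aser p q a i j =
      (HahnSeries.ofPowerSeries ℤ ℂ) (PowerSeries.X * psA p q a i j) := by
  unfold Aser gen psA
  rw [map_mul, HahnSeries.ofPowerSeries_X]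

lemma cls_eq (c : ℂ) :
    CLS c = (HahnSeries.ofPowerSeries ℤ ℂ) (PowerSeries.C c) := by
  unfold CLS
  rw [HahnSeries.ofPowerSeries_C]

lemma zX : zLS * (HahnSeries.ofPowerSeries ℤ ℂ) PowerSeries.X = 1 := by
  rw [HahnSeries.ofPowerSeries_X]
  unfold zLS
  rw [HahnSeries.single_mul_single]
  norm_num

lemma psI (p q : ℕ) (a : ℤ → ℤ → ℂ) :
    psA p q a 0 0 - PowerSeries.X * psA p q a 0 0 * PowerSeries.C (a 0 0) -
      PowerSeries.X * psA p q a 0 0 *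
        (∑ i ∈ Finset.Icc 1 q, ∑ j ∈ Finset.Icc 1 p,
          PowerSeries.C (a (i:ℤ) 0) * PowerSeries.C (a (-(j:ℤ)) 0) *
            (PowerSeries.X * psA p q (fun k m => a k (m+1)) ((i:ℤ)-1) ((j:ℤ)-1))) = 1 := by
  have h := ps_first p q a
  rw [Finset.sum_congr rfl (fun i' hi' => by
    rw [ps_fh0 p q a (by
      have := Finset.mem_Icc.mp hi'; omega : 1 ≤ (i':ℤ))] : ∀ i' ∈ Finset.Icc 1 q,
    PowerSeries.C (a (i':ℤ) 0) * psA p q a (i':ℤ) 0 =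
      PowerSeries.C (a (i':ℤ) 0) * (PowerSeries.X *
        ((∑ j' ∈ Finset.Icc 1 p, PowerSeries.C (a (-(j':ℤ)) 0) *
            psA p q (fun k m => a k (m+1)) ((i':ℤ)-1) ((j':ℤ)-1)) *
          psA p q a 0 0)))] at h
  have hpush : (∑ i' ∈ Finset.Icc 1 q, PowerSeries.C (a (i':ℤ) 0) * (PowerSeries.X *
        ((∑ j' ∈ Finset.Icc 1 p, PowerSeries.C (a (-(j':ℤ)) 0) *
            psA p q (fun k m => a k (m+1)) ((i':ℤ)-1) ((j':ℤ)-1)) *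
          psA p q a 0 0))) =
      psA p q a 0 0 *
        (∑ i ∈ Finset.Icc 1 q, ∑ j ∈ Finset.Icc 1 p,
          PowerSeries.C (a (i:ℤ) 0) * PowerSeries.C (a (-(j:ℤ)) 0) *
            (PowerSeries.X * psA p q (fun k m => a k (m+1)) ((i:ℤ)-1) ((j:ℤ)-1))) := by
    simp only [Finset.sum_mul, Finset.mul_sum]
    exact Finset.sum_congr rfl fun i _ => Finset.sum_congr rfl fun j _ => by ring
  rw [hpush] at h
  linear_combination h

/-- **Theorem 2.1** (relations between `A_{i,j}(z)` and the shifted series `A⁽¹⁾_{i,j}(z)`).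
Here `a k n` denotes `aₙ⁽ᵏ⁾`, and the shifted data is `a' k n = a k (n+1)`. -/
theorem theorem1_relations
    (p q : ℕ) (hp : 1 ≤ p) (hq : 1 ≤ q) (a : ℤ → ℤ → ℂ) :
    (zLS - CLS (a 0 0) -
        ∑ i ∈ Finset.Icc 1 q, ∑ j ∈ Finset.Icc 1 p,
          CLS (a (i : ℤ) 0) * CLS (a (-(j : ℤ)) 0) *
            Aser p q (fun k n => a k (n + 1)) ((i : ℤ) - 1) ((j : ℤ) - 1) ≠ 0 ∧
      Aser p q a 0 0 *
        (zLS - CLS (a 0 0) -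
          ∑ i ∈ Finset.Icc 1 q, ∑ j ∈ Finset.Icc 1 p,
            CLS (a (i : ℤ) 0) * CLS (a (-(j : ℤ)) 0) *
              Aser p q (fun k n => a k (n + 1)) ((i : ℤ) - 1) ((j : ℤ) - 1)) = 1) ∧
    (∀ j : ℤ, 1 ≤ j →
      Aser p q a 0 j =
        Aser p q a 0 0 *
          ∑ i ∈ Finset.Icc 1 q,
            CLS (a (i : ℤ) 0) * Aser p q (fun k n => a k (n + 1)) ((i : ℤ) - 1) (j - 1)) ∧
    (∀ i : ℤ, 1 ≤ i →
      Aser p q a i 0 =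
        Aser p q a 0 0 *
          ∑ j ∈ Finset.Icc 1 p,
            CLS (a (-(j : ℤ)) 0) * Aser p q (fun k n => a k (n + 1)) (i - 1) ((j : ℤ) - 1)) ∧
    (∀ i j : ℤ, 1 ≤ i → 1 ≤ j →
      Aser p q a 0 0 * Aser p q a i j =
        Aser p q a i 0 * Aser p q a 0 j +
          Aser p q a 0 0 * Aser p q (fun k n => a k (n + 1)) (i - 1) (j - 1)) := by
  have hS : (∑ i ∈ Finset.Icc 1 q, ∑ j ∈ Finset.Icc 1 p,
        CLS (a (i : ℤ) 0) * CLS (a (-(j : ℤ)) 0) *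
          Aser p q (fun k n => a k (n + 1)) ((i : ℤ) - 1) ((j : ℤ) - 1)) =
      (HahnSeries.ofPowerSeries ℤ ℂ)
        (∑ i ∈ Finset.Icc 1 q, ∑ j ∈ Finset.Icc 1 p,
          PowerSeries.C (a (i:ℤ) 0) * PowerSeries.C (a (-(j:ℤ)) 0) *
            (PowerSeries.X * psA p q (fun k n => a k (n+1)) ((i:ℤ)-1) ((j:ℤ)-1))) := by
    rw [map_sum]
    refine Finset.sum_congr rfl fun i _ => ?_
    rw [map_sum]
    refine Finset.sum_congr rfl fun j _ => ?_
    rw [map_mul, map_mul, cls_eq, cls_eq, aser_eq]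
  have hmul : Aser p q a 0 0 *
      (zLS - CLS (a 0 0) -
        ∑ i ∈ Finset.Icc 1 q, ∑ j ∈ Finset.Icc 1 p,
          CLS (a (i : ℤ) 0) * CLS (a (-(j : ℤ)) 0) *
            Aser p q (fun k n => a k (n + 1)) ((i : ℤ) - 1) ((j : ℤ) - 1)) = 1 := by
    rw [hS, aser_eq, cls_eq, mul_sub, mul_sub]
    have hz1 : (HahnSeries.ofPowerSeries ℤ ℂ) (PowerSeries.X * psA p q a 0 0) * zLS =
        (HahnSeries.ofPowerSeries ℤ ℂ) (psA p q a 0 0) := by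
      rw [map_mul]
      calc (HahnSeries.ofPowerSeries ℤ ℂ) PowerSeries.X *
            (HahnSeries.ofPowerSeries ℤ ℂ) (psA p q a 0 0) * zLS
          = (zLS * (HahnSeries.ofPowerSeries ℤ ℂ) PowerSeries.X) *
            (HahnSeries.ofPowerSeries ℤ ℂ) (psA p q a 0 0) := by ring
        _ = (HahnSeries.ofPowerSeries ℤ ℂ) (psA p q a 0 0) := by rw [zX, one_mul]
    rw [hz1, ← map_mul, ← map_mul, ← map_sub, ← map_sub]
    have := psI p q a
    rw [show psA p q a 0 0 -
        PowerSeries.X * psA p q a 0 0 * PowerSeries.C (a 0 0) -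
        PowerSeries.X * psA p q a 0 0 *
          (∑ i ∈ Finset.Icc 1 q, ∑ j ∈ Finset.Icc 1 p,
            PowerSeries.C (a (i:ℤ) 0) * PowerSeries.C (a (-(j:ℤ)) 0) *
              (PowerSeries.X * psA p q (fun k n => a k (n+1)) ((i:ℤ)-1) ((j:ℤ)-1))) = 1
      from psI p q a, map_one]
  refine ⟨⟨fun h0 => ?_, hmul⟩, ?_, ?_, ?_⟩
  · rw [h0, mul_zero] at hmul
    exact zero_ne_one hmul
  · -- (ii)
    intro j hj
    have hsum : (∑ i ∈ Finset.Icc 1 q,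
          CLS (a (i : ℤ) 0) * Aser p q (fun k n => a k (n + 1)) ((i : ℤ) - 1) (j - 1)) =
        (HahnSeries.ofPowerSeries ℤ ℂ)
          (∑ i ∈ Finset.Icc 1 q, PowerSeries.C (a (i:ℤ) 0) *
            (PowerSeries.X * psA p q (fun k n => a k (n+1)) ((i:ℤ)-1) (j-1))) := by
      rw [map_sum]
      refine Finset.sum_congr rfl fun i _ => ?_
      rw [map_mul, cls_eq, aser_eq]
    rw [hsum, aser_eq, aser_eq, ← map_mul]
    refine congrArg _ ?_
    have hx : (∑ i ∈ Finset.Icc 1 q, PowerSeries.C (a (i:ℤ) 0) *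
          (PowerSeries.X * psA p q (fun k n => a k (n+1)) ((i:ℤ)-1) (j-1))) =
        PowerSeries.X * ∑ i ∈ Finset.Icc 1 q, PowerSeries.C (a (i:ℤ) 0) *
          psA p q (fun k n => a k (n+1)) ((i:ℤ)-1) (j-1) := by
      rw [Finset.mul_sum]
      exact Finset.sum_congr rfl fun i _ => by ring
    rw [hx]
    have hle := ps_le p q a hj
    linear_combination PowerSeries.X * hle
  · -- (iii)
    intro i hi
    have hsum : (∑ j ∈ Finset.Icc 1 p,
          CLS (a (-(j : ℤ)) 0) * Aser p q (fun k n => a k (n + 1)) (i - 1) ((j : ℤ) - 1)) =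
        (HahnSeries.ofPowerSeries ℤ ℂ)
          (∑ j ∈ Finset.Icc 1 p, PowerSeries.C (a (-(j:ℤ)) 0) *
            (PowerSeries.X * psA p q (fun k n => a k (n+1)) (i-1) ((j:ℤ)-1))) := by
      rw [map_sum]
      refine Finset.sum_congr rfl fun j _ => ?_
      rw [map_mul, cls_eq, aser_eq]
    rw [hsum, aser_eq, aser_eq, ← map_mul]
    refine congrArg _ ?_
    have hx : (∑ j ∈ Finset.Icc 1 p, PowerSeries.C (a (-(j:ℤ)) 0) *
          (PowerSeries.X * psA p q (fun k n => a k (n+1)) (i-1) ((j:ℤ)-1))) =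
        PowerSeries.X * ∑ j ∈ Finset.Icc 1 p, PowerSeries.C (a (-(j:ℤ)) 0) *
          psA p q (fun k n => a k (n+1)) (i-1) ((j:ℤ)-1) := by
      rw [Finset.mul_sum]
      exact Finset.sum_congr rfl fun j _ => by ring
    rw [hx]
    have hfh0 := ps_fh0 p q a hi
    linear_combination PowerSeries.X * hfh0
  · -- (iv)
    intro i j hi hj
    rw [aser_eq p q a 0 0, aser_eq p q a i j, aser_eq p q a i 0, aser_eq p q a 0 j,
      aser_eq p q _ (i-1) (j-1), ← map_mul, ← map_mul, ← map_mul, ← map_add]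
    refine congrArg _ ?_
    have h1 := ps_fh p q a j hi
    have h2 := ps_fh0 p q a hi
    linear_combination (PowerSeries.X^2 * psA p q a 0 0) * h1 -
      (PowerSeries.X^2 * psA p q a 0 j) * h2
end
end

section
/- For all integers i, j ≥ 0, the series A_{i,j}(z) satisfy the two linear relations in ℂ((z^{−1})): z·A_{i,j}(z) − δ_{i,j} = Σ_{r=1}^{p} a_j^{(−r)} A_{i,j+r}(z) + Σ_{r=0}^{min(j,q)} a_{j−r}^{(r)} A_{i,j−r}(z), and z·A_{i,j}(z) − δ_{i,j} = Σ_{r=1}^{q} a_i^{(r)} A_{i+r,j}(z) + Σ_{r=0}^{min(i,p)} a_{i−r}^{(−r)} A_{i−r,j}(z), where δ_{i,j} is the Kronecker delta. -/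
open scoped BigOperators
open Finset

noncomputable section

lemma mk_eq (c : ℕ → ℂ) : PowerSeries.mk c =
    PowerSeries.C (c 0) + PowerSeries.X * PowerSeries.mk (fun n => c (n+1)) := by
  ext n; cases n <;> simp

lemma zLS_mul_gen (c : ℕ → ℂ) : zLS * gen c = CLS (c 0) + gen (fun n => c (n+1)) := by
  have h1 : zLS * HahnSeries.single (1 : ℤ) (1 : ℂ) = 1 := by
    rw [zLS, HahnSeries.single_mul_single]; norm_num [HahnSeries.single_zero_one]
  rw [gen, ← mul_assoc, h1, one_mul, mk_eq, map_add, map_mul,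
    HahnSeries.ofPowerSeries_C, HahnSeries.ofPowerSeries_X, CLS, gen]

lemma CLS_mul_gen (x : ℂ) (c : ℕ → ℂ) : CLS x * gen c = gen (fun n => x * c n) := by
  have : PowerSeries.mk (fun n => x * c n) = PowerSeries.C x * PowerSeries.mk c := by
    ext n; simp
  conv_rhs => rw [gen, this]
  rw [map_mul, HahnSeries.ofPowerSeries_C, CLS, gen]; ring

lemma gen_add (c d : ℕ → ℂ) : gen c + gen d = gen (fun n => c n + d n) := by
  have : PowerSeries.mk (fun n => c n + d n) = PowerSeries.mk c + PowerSeries.mk d := by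
    ext n; simp
  conv_rhs => rw [gen, this]
  rw [map_add, gen, gen]; ring

lemma gen_sum {α : Type*} [DecidableEq α] (S : Finset α) (f : α → ℂ) (g : α → ℕ → ℂ) :
    ∑ r ∈ S, CLS (f r) * gen (g r) = gen (fun n => ∑ r ∈ S, f r * g r n) := by
  induction S using Finset.induction with
  | empty =>
    simp only [Finset.sum_empty]
    have : gen (fun _ => (0:ℂ)) = 0 := by
      have : PowerSeries.mk (fun _ => (0:ℂ)) = 0 := by ext n; simp
      rw [gen, this, map_zero, mul_zero]
    rw [this]
  | @insert x T h ih =>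
    rw [Finset.sum_insert h, ih, CLS_mul_gen, gen_add]
    congr 1; funext n; rw [Finset.sum_insert h]

lemma hgt_congr {i : ℤ} {σ τ : ℕ → ℤ} {k : ℕ} (h : ∀ m < k, σ m = τ m) :
    hgt i σ k = hgt i τ k := by
  unfold hgt; congr 1; exact Finset.sum_congr rfl fun m hm => h m (Finset.mem_range.mp hm)

lemma Apoly_zero (p q : ℕ) (a : ℤ → ℤ → ℂ) (i j : ℤ) (hi : 0 ≤ i) :
    Apoly p q a 0 i j = if i = j then 1 else 0 := by
  have hs : steps p q 0 = {fun x => Fin.elim0 x} := by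
    apply Finset.ext; intro f
    simp only [steps, Fintype.mem_piFinset, Finset.mem_singleton]
    constructor
    · intro _; exact funext fun x => x.elim0
    · intro _ x; exact x.elim0
  simp only [Apoly, hs, Finset.sum_singleton, hgt_zero, wgt, Finset.range_zero,
    Finset.prod_empty]
  have hP : ∀ k ≤ 0, (0:ℤ) ≤ hgt i (_root_.ext fun x => Fin.elim0 x) k := by
    intro k hk; interval_cases k; rw [hgt_zero]; exact hi
  rw [if_congr (and_iff_left hP) rfl rfl]

lemma Apoly_target_neg (p q : ℕ) (a : ℤ → ℤ → ℂ) (n : ℕ) (i j : ℤ) (hj : j < 0) :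
    Apoly p q a n i j = 0 := by
  apply Finset.sum_eq_zero; intro s _
  rw [if_neg]; rintro ⟨h1, h2⟩; have := h2 n le_rfl; omega

lemma Apoly_source_neg (p q : ℕ) (a : ℤ → ℤ → ℂ) (n : ℕ) (i j : ℤ) (hi : i < 0) :
    Apoly p q a n i j = 0 := by
  apply Finset.sum_eq_zero; intro s _
  rw [if_neg]; rintro ⟨h1, h2⟩; have := h2 0 (Nat.zero_le n); rw [hgt_zero] at this; omega

-- first-step decomposition
lemma Apoly_succ_first (p q : ℕ) (a : ℤ → ℤ → ℂ) (n : ℕ) (i j : ℤ) (hi : 0 ≤ i) :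
    Apoly p q a (n+1) i j =
      ∑ x ∈ Finset.Icc (-(p:ℤ)) q, stepW a i x * Apoly p q a n (i+x) j := by
  rw [Apoly]
  have key : ∑ s ∈ steps p q (n+1),
      (if hgt i (ext s) (n+1) = j ∧ ∀ k ≤ n+1, 0 ≤ hgt i (ext s) k
        then wgt a (n+1) i (ext s) else 0) =
      ∑ z ∈ (Finset.Icc (-(p:ℤ)) q) ×ˢ steps p q n,
      (if hgt i (ext (Fin.cons z.1 z.2)) (n+1) = j ∧
          ∀ k ≤ n+1, 0 ≤ hgt i (ext (Fin.cons z.1 z.2)) k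
        then wgt a (n+1) i (ext (Fin.cons z.1 z.2)) else 0) := by
    apply Finset.sum_nbij' (fun s => (s 0, Fin.tail s)) (fun z => Fin.cons z.1 z.2)
    · intro s hs
      simp only [steps, Fintype.mem_piFinset] at hs
      simp only [Finset.mem_product, steps, Fintype.mem_piFinset]
      exact ⟨hs 0, fun x => hs _⟩
    · intro z hz
      simp only [Finset.mem_product, steps, Fintype.mem_piFinset] at hz
      simp only [steps, Fintype.mem_piFinset]
      intro x
      refine Fin.cases ?_ ?_ x
      · simpa using hz.1
      · intro m; simpa using hz.2 m
    · intro s _; exact Fin.cons_self_tail s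
    · intro z _; simp
    · intro s _; simp [Fin.cons_self_tail]
  rw [key, Finset.sum_product]
  apply Finset.sum_congr rfl
  intro x hx
  rw [Apoly, Finset.mul_sum]
  apply Finset.sum_congr rfl
  intro t ht
  set σ := _root_.ext (Fin.cons x t) with hσ
  set τ := _root_.ext t with hτ
  have ha : σ 0 = x := by
    show (if h : 0 < n+1 then (Fin.cons x t : Fin (n+1) → ℤ) ⟨0, h⟩ else 0) = x
    rw [dif_pos (Nat.succ_pos n)]
    have : (⟨0, Nat.succ_pos n⟩ : Fin (n+1)) = 0 := by exact Fin.mk_zero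
    rw [this, Fin.cons_zero]
  have hb : ∀ m, σ (m+1) = τ m := by
    intro m
    show (if h : m+1 < n+1 then (Fin.cons x t : Fin (n+1) → ℤ) ⟨m+1, h⟩ else 0)
        = (if h : m < n then t ⟨m, h⟩ else 0)
    by_cases hm : m < n
    · rw [dif_pos (Nat.succ_lt_succ hm), dif_pos hm]
      have : (⟨m+1, Nat.succ_lt_succ hm⟩ : Fin (n+1)) = Fin.succ ⟨m, hm⟩ := rfl
      rw [this, Fin.cons_succ]
    · rw [dif_neg (by omega : ¬ m+1 < n+1), dif_neg hm]
  have hc : ∀ k, hgt i σ (k+1) = hgt (i+x) τ k := by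
    intro k
    unfold hgt
    rw [Finset.sum_range_succ', ha]
    have : ∑ m ∈ Finset.range k, σ (m+1) = ∑ m ∈ Finset.range k, τ m :=
      Finset.sum_congr rfl fun m _ => hb m
    omega
  have hd : wgt a (n+1) i σ = stepW a i x * wgt a n (i+x) τ := by
    unfold wgt
    rw [Finset.prod_range_succ']
    rw [hgt_zero, ha, mul_comm]
    congr 1
    exact Finset.prod_congr rfl fun k _ => by rw [hc, hb]
  have he : (hgt i σ (n+1) = j ∧ ∀ k ≤ n+1, 0 ≤ hgt i σ k) ↔
      (hgt (i+x) τ n = j ∧ ∀ k ≤ n, 0 ≤ hgt (i+x) τ k) := by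
    constructor
    · rintro ⟨h1, h2⟩
      exact ⟨by rw [← hc]; exact h1, fun k hk => by rw [← hc]; exact h2 (k+1) (by omega)⟩
    · rintro ⟨h1, h2⟩
      refine ⟨by rw [hc]; exact h1, fun k hk => ?_⟩
      cases k with
      | zero => rw [hgt_zero]; exact hi
      | succ m => rw [hc]; exact h2 m (by omega)
  rw [if_congr he hd rfl, mul_ite, mul_zero]

-- last-step decomposition
lemma Apoly_succ_last (p q : ℕ) (a : ℤ → ℤ → ℂ) (n : ℕ) (i j : ℤ) (hj : 0 ≤ j) :
    Apoly p q a (n+1) i j =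
      ∑ x ∈ Finset.Icc (-(p:ℤ)) q, stepW a (j - x) x * Apoly p q a n i (j - x) := by
  rw [Apoly]
  have key : ∑ s ∈ steps p q (n+1),
      (if hgt i (ext s) (n+1) = j ∧ ∀ k ≤ n+1, 0 ≤ hgt i (ext s) k
        then wgt a (n+1) i (ext s) else 0) =
      ∑ z ∈ (Finset.Icc (-(p:ℤ)) q) ×ˢ steps p q n,
      (if hgt i (ext (Fin.snoc z.2 z.1)) (n+1) = j ∧
          ∀ k ≤ n+1, 0 ≤ hgt i (ext (Fin.snoc z.2 z.1)) k
        then wgt a (n+1) i (ext (Fin.snoc z.2 z.1)) else 0) := by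
    apply Finset.sum_nbij' (fun s => (s (Fin.last n), Fin.init s)) (fun z => Fin.snoc z.2 z.1)
    · intro s hs
      simp only [steps, Fintype.mem_piFinset] at hs
      simp only [Finset.mem_product, steps, Fintype.mem_piFinset]
      exact ⟨hs _, fun x => hs _⟩
    · intro z hz
      simp only [Finset.mem_product, steps, Fintype.mem_piFinset] at hz
      simp only [steps, Fintype.mem_piFinset]
      intro x
      refine Fin.lastCases ?_ ?_ x
      · simpa using hz.1
      · intro m; simpa using hz.2 m
    · intro s _; exact Fin.snoc_init_self s
    · intro z _; simp
    · intro s _; simp [Fin.snoc_init_self]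
  rw [key, Finset.sum_product]
  apply Finset.sum_congr rfl
  intro x hx
  rw [Apoly, Finset.mul_sum]
  apply Finset.sum_congr rfl
  intro t ht
  set σ := _root_.ext (Fin.snoc t x : Fin (n+1) → ℤ) with hσ
  set τ := _root_.ext t with hτ
  have ha : σ n = x := by
    show (if h : n < n+1 then (Fin.snoc t x : Fin (n+1) → ℤ) ⟨n, h⟩ else 0) = x
    rw [dif_pos (Nat.lt_succ_self n)]
    have : (⟨n, Nat.lt_succ_self n⟩ : Fin (n+1)) = Fin.last n := rfl
    rw [this, Fin.snoc_last]
  have hb : ∀ m < n, σ m = τ m := by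
    intro m hm
    show (if h : m < n+1 then (Fin.snoc t x : Fin (n+1) → ℤ) ⟨m, h⟩ else 0)
        = (if h : m < n then t ⟨m, h⟩ else 0)
    rw [dif_pos (Nat.lt_succ_of_lt hm), dif_pos hm]
    have : (⟨m, Nat.lt_succ_of_lt hm⟩ : Fin (n+1)) = Fin.castSucc ⟨m, hm⟩ := rfl
    rw [this, Fin.snoc_castSucc]
  have hc : ∀ k ≤ n, hgt i σ k = hgt i τ k := by
    intro k hk
    exact hgt_congr fun m hm => hb m (lt_of_lt_of_le hm hk)
  have hcn : hgt i σ (n+1) = hgt i τ n + x := by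
    unfold hgt
    rw [Finset.sum_range_succ, ha]
    have := hc n le_rfl
    unfold hgt at this; omega
  have hd : wgt a (n+1) i σ = wgt a n i τ * stepW a (hgt i τ n) x := by
    unfold wgt
    rw [Finset.prod_range_succ, hc n le_rfl, ha]
    congr 1
    exact Finset.prod_congr rfl fun k hk => by
      have hk' := Finset.mem_range.mp hk
      rw [hc k hk'.le, hb k hk']
  have he : (hgt i σ (n+1) = j ∧ ∀ k ≤ n+1, 0 ≤ hgt i σ k) ↔
      (hgt i τ n = j - x ∧ ∀ k ≤ n, 0 ≤ hgt i τ k) := by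
    constructor
    · rintro ⟨h1, h2⟩
      rw [hcn] at h1
      exact ⟨by omega, fun k hk => by rw [← hc k hk]; exact h2 k (by omega)⟩
    · rintro ⟨h1, h2⟩
      refine ⟨by rw [hcn]; omega, fun k hk => ?_⟩
      rcases Nat.lt_succ_iff_lt_or_eq.mp (Nat.lt_succ_of_le hk) with h | h
      · rw [hc k (by omega)]; exact h2 k (by omega)
      · subst h; rw [hcn]; omega
  by_cases hcond : hgt i τ n = j - x ∧ ∀ k ≤ n, 0 ≤ hgt i τ k
  · rw [if_pos (he.mpr hcond), if_pos hcond, hd, hcond.1, mul_comm]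
  · rw [if_neg (fun h => hcond (he.mp h)), if_neg hcond, mul_zero]

lemma sum_Icc_cast (c d : ℕ) (f : ℤ → ℂ) :
    ∑ x ∈ Finset.Icc (c:ℤ) (d:ℤ), f x = ∑ r ∈ Finset.Icc c d, f r := by
  refine Finset.sum_nbij' (i := fun x => x.toNat) (j := fun r => (r:ℤ)) ?_ ?_ ?_ ?_ ?_
  · intro x hx; simp only [Finset.mem_Icc] at *; omega
  · intro r hr; simp only [Finset.mem_Icc] at *; omega
  · intro x hx; simp only [Finset.mem_Icc] at hx; beta_reduce; omega
  · intro r hr; simp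
  · intro x hx; simp only [Finset.mem_Icc] at hx
    congr 1; beta_reduce; omega

lemma sum_Icc_neg (c d : ℕ) (f : ℤ → ℂ) :
    ∑ x ∈ Finset.Icc (-(d:ℤ)) (-(c:ℤ)), f x = ∑ r ∈ Finset.Icc c d, f (-(r:ℤ)) := by
  refine Finset.sum_nbij' (i := fun x => (-x).toNat) (j := fun r => -(r:ℤ)) ?_ ?_ ?_ ?_ ?_
  · intro x hx; simp only [Finset.mem_Icc] at *; omega
  · intro r hr; simp only [Finset.mem_Icc] at *; omega
  · intro x hx; simp only [Finset.mem_Icc] at hx; beta_reduce; omega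
  · intro r hr; simp
  · intro x hx; simp only [Finset.mem_Icc] at hx
    congr 1; beta_reduce; omega

lemma rel1 (p q : ℕ) (a : ℤ → ℤ → ℂ) (n : ℕ) (i j : ℤ) (hj : 0 ≤ j) :
    Apoly p q a (n+1) i j =
      (∑ r ∈ Finset.Icc 1 p, a (-(r:ℤ)) j * Apoly p q a n i (j + r)) +
        ∑ r ∈ Finset.Icc 0 (min j.toNat q), a (r:ℤ) (j - r) * Apoly p q a n i (j - r) := by
  rw [Apoly_succ_last p q a n i j hj]
  have hsplit : Finset.Icc (-(p:ℤ)) (q:ℤ) =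
      Finset.Icc (-(p:ℤ)) (-1) ∪ Finset.Icc (0:ℤ) (q:ℤ) := by
    apply Finset.ext; intro x; simp only [Finset.mem_Icc, Finset.mem_union]; omega
  have hdisj : Disjoint (Finset.Icc (-(p:ℤ)) (-1)) (Finset.Icc (0:ℤ) (q:ℤ)) := by
    rw [Finset.disjoint_left]; intro x hx hx'
    simp only [Finset.mem_Icc] at *; omega
  rw [hsplit, Finset.sum_union hdisj]
  congr 1
  · have h1 : Finset.Icc (-(p:ℤ)) (-1) = Finset.Icc (-(p:ℤ)) (-((1:ℕ):ℤ)) := by norm_num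
    rw [h1, sum_Icc_neg 1 p]
    apply Finset.sum_congr rfl
    intro r hr
    simp only [Finset.mem_Icc] at hr
    have hr1 : (1:ℤ) ≤ (r:ℤ) := by exact_mod_cast hr.1
    rw [sub_neg_eq_add, stepW, if_neg (by omega)]
    congr 2; omega
  · have h0 : Finset.Icc (0:ℤ) (q:ℤ) = Finset.Icc ((0:ℕ):ℤ) ((q:ℕ):ℤ) := by norm_num
    rw [h0, sum_Icc_cast 0 q]
    rw [(Finset.sum_subset (Finset.Icc_subset_Icc_right (min_le_right j.toNat q)) ?_)]
    · apply Finset.sum_congr rfl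
      intro r hr
      rw [stepW, if_pos (by positivity)]
    · intro r hr hr'
      simp only [Finset.mem_Icc] at hr hr'
      have : (j:ℤ) - r < 0 := by omega
      rw [Apoly_target_neg p q a n i _ this, mul_zero]

lemma rel2 (p q : ℕ) (a : ℤ → ℤ → ℂ) (n : ℕ) (i j : ℤ) (hi : 0 ≤ i) :
    Apoly p q a (n+1) i j =
      (∑ r ∈ Finset.Icc 1 q, a (r:ℤ) i * Apoly p q a n (i + r) j) +
        ∑ r ∈ Finset.Icc 0 (min i.toNat p), a (-(r:ℤ)) (i - r) * Apoly p q a n (i - r) j := by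
  rw [Apoly_succ_first p q a n i j hi]
  have hsplit : Finset.Icc (-(p:ℤ)) (q:ℤ) =
      Finset.Icc (1:ℤ) (q:ℤ) ∪ Finset.Icc (-(p:ℤ)) (0:ℤ) := by
    apply Finset.ext; intro x; simp only [Finset.mem_Icc, Finset.mem_union]; omega
  have hdisj : Disjoint (Finset.Icc (1:ℤ) (q:ℤ)) (Finset.Icc (-(p:ℤ)) (0:ℤ)) := by
    rw [Finset.disjoint_left]; intro x hx hx'
    simp only [Finset.mem_Icc] at *; omega
  rw [hsplit, Finset.sum_union hdisj]
  congr 1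
  · have h1 : Finset.Icc (1:ℤ) (q:ℤ) = Finset.Icc ((1:ℕ):ℤ) ((q:ℕ):ℤ) := by norm_num
    rw [h1, sum_Icc_cast 1 q]
    apply Finset.sum_congr rfl
    intro r hr
    rw [stepW, if_pos (by positivity)]
  · have h0 : Finset.Icc (-(p:ℤ)) (0:ℤ) = Finset.Icc (-((p:ℕ):ℤ)) (-((0:ℕ):ℤ)) := by norm_num
    rw [h0, sum_Icc_neg 0 p]
    rw [(Finset.sum_subset (Finset.Icc_subset_Icc_right (min_le_right i.toNat p)) ?_)]
    · apply Finset.sum_congr rfl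
      intro r hr
      rw [stepW]
      rcases Nat.eq_zero_or_pos r with h | h
      · subst h; norm_num
      · rw [if_neg (by omega : ¬ (0:ℤ) ≤ -(r:ℤ)),
          show i + -(r:ℤ) = i - r by ring]
    · intro r hr hr'
      simp only [Finset.mem_Icc] at hr hr'
      have : (i:ℤ) - r < 0 := by omega
      rw [Apoly_source_neg p q a n _ j this, mul_zero]

/-- **Proposition 2.2** (linear relations for the series `A_{i,j}(z)`). -/
theorem proposition_linear_relations
    (p q : ℕ) (hp : 1 ≤ p) (hq : 1 ≤ q) (a : ℤ → ℤ → ℂ) (i j : ℤ)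
    (hi : 0 ≤ i) (hj : 0 ≤ j) :
    (zLS * Aser p q a i j - CLS (if i = j then 1 else 0) =
        ∑ r ∈ Finset.Icc 1 p, CLS (a (-(r : ℤ)) j) * Aser p q a i (j + r) +
          ∑ r ∈ Finset.Icc 0 (min j.toNat q),
            CLS (a (r : ℤ) (j - r)) * Aser p q a i (j - r)) ∧
    (zLS * Aser p q a i j - CLS (if i = j then 1 else 0) =
        ∑ r ∈ Finset.Icc 1 q, CLS (a (r : ℤ) i) * Aser p q a (i + r) j +
          ∑ r ∈ Finset.Icc 0 (min i.toNat p),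
            CLS (a (-(r : ℤ)) (i - r)) * Aser p q a (i - r) j) := by
  constructor
  · show zLS * gen _ - _ = _
    simp only [Aser]
    rw [zLS_mul_gen, Apoly_zero p q a i j hi, add_sub_cancel_left, gen_sum, gen_sum, gen_add]
    congr 1
    funext n
    exact rel1 p q a n i j hj
  · show zLS * gen _ - _ = _
    simp only [Aser]
    rw [zLS_mul_gen, Apoly_zero p q a i j hi, add_sub_cancel_left, gen_sum, gen_sum, gen_add]
    congr 1
    funext n
    exact rel2 p q a n i j hi
end
end
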